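/- Let (X,d) be a metric space with d₀ := dim_H(X) < ∞. Then H^{d₀} is absolutely continuous with respect to H_loc: every Borel set N with H_loc(N) = 0 satisfies H^{d₀}(N) = 0. -/

import Mathlib

/- STATEMENT 4: Let (X,d) be a metric space with d₀ := dim_H(X) < ∞. Then H^{d₀} is
   absolutely continuous with respect to the local Hausdorff measure H_loc: every Borel
   set N with H_loc(N) = 0 satisfies H^{d₀}(N) = 0. -/

open MeasureTheory Metric
open scoped ENNReal

/-- The local Hausdorff measure: Carathéodory construction with
`τ(U) = diam(U)^{dim_H U}`. -/
noncomputable def locHausdorffMeasure (X : Type*) [MetricSpace X] [MeasurableSpace X]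
    [BorelSpace X] : Measure X :=
  Measure.mkMetric' (fun U => EMetric.diam U ^ (dimH U).toReal)

/-- Outer measure comparison: `mkMetric (· ^ d₀) ≤ mkMetric' τ` where
`τ U = diam U ^ (dimH U).toReal`, assuming `d₀ = dimH univ ≠ ⊤`. -/
theorem aux_outer_le {X : Type*} [MetricSpace X] [MeasurableSpace X] [BorelSpace X]
    (hfin : dimH (Set.univ : Set X) ≠ ⊤) :
    (OuterMeasure.mkMetric (fun r => r ^ (dimH (Set.univ : Set X)).toReal) : OuterMeasure X)
      ≤ OuterMeasure.mkMetric' (fun U => EMetric.diam U ^ (dimH U).toReal) := by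
  rw [OuterMeasure.mkMetric, OuterMeasure.mkMetric']
  refine iSup₂_le fun r hr => ?_
  have h1 : (0 : ℝ≥0∞) < min r 1 := lt_min hr zero_lt_one
  refine le_trans (OuterMeasure.mkMetric'.mono_pre _ (min_le_left r 1)) ?_
  refine le_iSup₂_of_le (min r 1) h1 ?_
  refine OuterMeasure.mkMetric'.le_pre.2 fun s hs => ?_
  refine (OuterMeasure.mkMetric'.pre_le hs).trans ?_
  exact ENNReal.rpow_le_rpow_of_exponent_ge
    (hs.trans (min_le_right r 1))
    (ENNReal.toReal_mono hfin (dimH_mono (Set.subset_univ s)))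

theorem statement4 {X : Type*} [MetricSpace X] [MeasurableSpace X] [BorelSpace X]
    (hfin : dimH (Set.univ : Set X) ≠ ⊤)
    (N : Set X) (hN : MeasurableSet N) (h0 : locHausdorffMeasure X N = 0) :
    μH[(dimH (Set.univ : Set X)).toReal] N = 0 := by
  have hH : μH[(dimH (Set.univ : Set X)).toReal] N
      = (OuterMeasure.mkMetric (fun r => r ^ (dimH (Set.univ : Set X)).toReal) :
          OuterMeasure X) N := by
    rw [show (μH[(dimH (Set.univ : Set X)).toReal] : Measure X)
        = Measure.mkMetric (fun r => r ^ (dimH (Set.univ : Set X)).toReal) from rfl,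
      ← OuterMeasure.coe_mkMetric]
  have hL : locHausdorffMeasure X N
      = (OuterMeasure.mkMetric' (fun U => EMetric.diam U ^ (dimH U).toReal) :
          OuterMeasure X) N := by
    rw [show locHausdorffMeasure X N
        = (locHausdorffMeasure X).toOuterMeasure N from rfl]
    rw [locHausdorffMeasure, Measure.mkMetric'_toOuterMeasure, OuterMeasure.trim_eq _ hN]
  refine le_antisymm ?_ zero_le
  rw [hH, ← h0, hL]
  exact aux_outer_le hfin N
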